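/- Let n ≥ 0, let ρ be any 2ⁿ×2ⁿ complex matrix with rows and columns indexed by 𝔽₂ⁿ, and let H_X ⊆ 𝔽₂ⁿ be a subspace. Then Σ_{a ∈ H_X} r_ρ(a) = |H_X| · 2^{−n} · Σ_{b ∈ H_X^{⊥s}} (tr(ρ Z^b))², where H_X^{⊥s} = {b ∈ 𝔽₂ⁿ : a·b = 0 for all a ∈ H_X} and r_ρ(a) = Σ_{x ∈ 𝔽₂ⁿ} ρ_{x,x} ρ_{x+a,x+a}. -/

import Mathlib

/-- The field with two elements. -/
abbrev F2 := ZMod 2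

/-- The diagonal matrix `Z^b` with entries `(Z^b)_{x,x} = (−1)^{b·x}`. -/
noncomputable def Zmat {n : ℕ} (b : Fin n → F2) :
    Matrix (Fin n → F2) (Fin n → F2) ℂ :=
  Matrix.diagonal (fun x => (-1 : ℂ) ^ (∑ i, b i * x i).val)

/-- The computational difference sampling weight
`r_ρ(a) = Σ_x ρ_{x,x} ρ_{x+a,x+a}`. -/
noncomputable def cds {n : ℕ} (ρ : Matrix (Fin n → F2) (Fin n → F2) ℂ)
    (a : Fin n → F2) : ℂ :=
  ∑ x, ρ x x * ρ (x + a) (x + a)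

/- ### Auxiliary lemmas -/

lemma f2cases (u : F2) : u = 0 ∨ u = 1 := by revert u; decide

lemma f2cancel : ∀ u v : F2, u + (u + v) = v := by decide

lemma f2cancel' : ∀ u v : F2, u + v + v = u := by decide

lemma negpow_mul (u v : F2) : (-1:ℂ)^u.val * (-1)^v.val = (-1)^((u+v).val) := by
  rcases f2cases u with h|h <;> rcases f2cases v with h2|h2 <;> subst h <;> subst h2 <;>
    simp only [show ((0:F2)+0).val = 0 from rfl, show ((0:F2)+1).val = 1 from rfl,
      show ((1:F2)+0).val = 1 from rfl, show ((1:F2)+1).val = 0 from rfl,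
      show (0:F2).val = 0 from rfl, show (1:F2).val = 1 from rfl] <;> norm_num

lemma negpow_succ (u : F2) : (-1:ℂ)^((u+1).val) = -(-1)^u.val := by
  rcases f2cases u with h|h <;> subst h <;>
    simp only [show ((0:F2)+1).val = 1 from rfl, show ((1:F2)+1).val = 0 from rfl,
      show (0:F2).val = 0 from rfl, show (1:F2).val = 1 from rfl] <;> norm_num

noncomputable def Phi (n : ℕ) : (Fin n → F2) ≃ₗ[F2] Module.Dual F2 (Fin n → F2) :=
  (Pi.basisFun F2 (Fin n)).toDualEquiv

lemma Phi_apply (n : ℕ) (b a : Fin n → F2) : Phi n b a = ∑ i, a i * b i := by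
  have h : a = ∑ i, a i • (Pi.basisFun F2 (Fin n)) i := by
    ext j; simp [Pi.basisFun_apply, Pi.single_apply, Finset.sum_ite_eq']
  have h2 : ∀ i, Phi n b ((Pi.basisFun F2 (Fin n)) i) = b i := by
    intro i
    rw [Phi, Module.Basis.toDualEquiv_apply, Module.Basis.toDual_apply_left, Pi.basisFun_repr]
  conv_lhs => rw [h, map_sum]
  simp only [map_smul, smul_eq_mul, h2]

/-- The orthogonal complement of `HX` w.r.t. the dot product. -/
noncomputable def Kmod {n : ℕ} (HX : Submodule F2 (Fin n → F2)) :
    Submodule F2 (Fin n → F2) :=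
  HX.dualAnnihilator.comap (Phi n).toLinearMap

lemma mem_Kmod {n : ℕ} (HX : Submodule F2 (Fin n → F2)) (b : Fin n → F2) :
    b ∈ Kmod HX ↔ ∀ a ∈ HX, ∑ i, a i * b i = 0 := by
  simp only [Kmod, Submodule.mem_comap, LinearEquiv.coe_coe, Submodule.mem_dualAnnihilator]
  constructor
  · intro h a ha; rw [← Phi_apply]; exact h a ha
  · intro h a ha; rw [Phi_apply]; exact h a ha

lemma mem_HX_iff {n : ℕ} (HX : Submodule F2 (Fin n → F2)) (c : Fin n → F2) :
    c ∈ HX ↔ ∀ b ∈ Kmod HX, ∑ i, b i * c i = 0 := by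
  constructor
  · intro hc b hb
    have := (mem_Kmod HX b).1 hb c hc
    rw [← this]
    exact Finset.sum_congr rfl (fun i _ => mul_comm _ _)
  · intro h
    rw [← Subspace.forall_mem_dualAnnihilator_apply_eq_zero_iff HX c]
    intro φ hφ
    have hb : (Phi n).symm φ ∈ Kmod HX := by
      simp [Kmod, Submodule.mem_comap, hφ]
    have h1 := h _ hb
    have h2 : Phi n ((Phi n).symm φ) c = 0 := by
      rw [Phi_apply, ← h1]
      exact Finset.sum_congr rfl (fun i _ => mul_comm _ _)
    rwa [LinearEquiv.apply_symm_apply] at h2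

lemma card_W {n : ℕ} (W : Submodule F2 (Fin n → F2)) :
    Nat.card W = 2 ^ Module.finrank F2 W := by
  have : Fintype W := Fintype.ofFinite W
  have := Module.card_eq_pow_finrank (K := F2) (V := W)
  rw [Nat.card_eq_fintype_card, this, ZMod.card]

lemma card_mul {n : ℕ} (HX : Submodule F2 (Fin n → F2)) :
    Nat.card HX * Nat.card (Kmod HX) = 2 ^ n := by
  rw [card_W, card_W]
  have e1 : Module.finrank F2 (Kmod HX) = Module.finrank F2 HX.dualAnnihilator :=
    LinearEquiv.finrank_eq (LinearEquiv.ofSubmodule' _ _)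
  have e2 := Subspace.finrank_add_finrank_dualCoannihilator_eq HX.dualAnnihilator
  rw [Subspace.dualAnnihilator_dualCoannihilator_eq] at e2
  have e3 : Module.finrank F2 (Fin n → F2) = n := by simp
  rw [e3] at e2
  rw [e1, ← pow_add,
    show Module.finrank F2 HX + Module.finrank F2 HX.dualAnnihilator = n from by omega]

/-- The character-sum orthogonality relation. -/
lemma char_sum {n : ℕ} (HX : Submodule F2 (Fin n → F2))
    (hK : ((Kmod HX : Set (Fin n → F2))).Finite) (c : Fin n → F2)
    [Decidable (c ∈ HX)] :
    ∑ b ∈ hK.toFinset, (-1:ℂ)^((∑ i, b i * c i).val)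
      = if c ∈ HX then (hK.toFinset.card : ℂ) else 0 := by
  by_cases hc : c ∈ HX
  · rw [if_pos hc]
    rw [Finset.sum_congr rfl (fun b hb => ?_), Finset.sum_const, nsmul_eq_mul, mul_one]
    have hb' : b ∈ Kmod HX := hK.mem_toFinset.1 hb
    rw [(mem_HX_iff HX c).1 hc b hb']
    norm_num [show (0:F2).val = 0 from rfl]
  · rw [if_neg hc]
    have : ¬ (∀ b ∈ Kmod HX, ∑ i, b i * c i = 0) := fun h => hc ((mem_HX_iff HX c).2 h)
    push_neg at this
    obtain ⟨b₀, hb₀, hbc⟩ := this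
    have hbc1 : ∑ i, b₀ i * c i = 1 := by
      rcases f2cases (∑ i, b₀ i * c i) with h|h
      · exact absurd h hbc
      · exact h
    set S := ∑ b ∈ hK.toFinset, (-1:ℂ)^((∑ i, b i * c i).val) with hS
    have key : S = -S := by
      rw [hS, ← Finset.sum_neg_distrib]
      refine Finset.sum_equiv (Equiv.addRight b₀) (fun b => ?_) (fun b hb => ?_)
      · simp only [hK.mem_toFinset, Equiv.coe_addRight, SetLike.mem_coe]
        constructor
        · intro h; exact (Kmod HX).add_mem h hb₀
        · intro h
          have : b + b₀ + b₀ = b := by funext i; exact f2cancel' (b i) (b₀ i)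
          rw [← this]; exact (Kmod HX).add_mem h hb₀
      · simp only [Equiv.coe_addRight]
        have hsum : ∑ i, (b + b₀) i * c i = (∑ i, b i * c i) + 1 := by
          rw [← hbc1, ← Finset.sum_add_distrib]
          exact Finset.sum_congr rfl (fun i _ => by simp [Pi.add_apply, add_mul])
        rw [hsum, negpow_succ, neg_neg]
    have h2 : S + S = 0 := by linear_combination key
    have h3 : (2:ℂ) * S = 0 := by ring_nf; linear_combination h2
    rcases mul_eq_zero.1 h3 with h|h
    · norm_num at h
    · exact h

lemma trace_eq {n : ℕ} (ρ : Matrix (Fin n → F2) (Fin n → F2) ℂ) (b : Fin n → F2) :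
    Matrix.trace (ρ * Zmat b) = ∑ x, ρ x x * (-1:ℂ)^((∑ i, b i * x i).val) := by
  simp [Zmat, Matrix.trace, Matrix.diag, Matrix.mul_diagonal]

/-- For any `2ⁿ×2ⁿ` complex matrix `ρ` indexed by `𝔽₂ⁿ` and a subspace
`H_X ⊆ 𝔽₂ⁿ`, `Σ_{a ∈ H_X} r_ρ(a) = |H_X| · 2^{−n} · Σ_{b ∈ H_X^{⊥s}} (tr(ρ Z^b))²`,
where `H_X^{⊥s} = {b : ∀ a ∈ H_X, a·b = 0}`. -/
theorem stmt12 (n : ℕ) (ρ : Matrix (Fin n → F2) (Fin n → F2) ℂ)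
    (HX : Submodule F2 (Fin n → F2)) :
    (∑ᶠ a ∈ (HX : Set (Fin n → F2)), cds ρ a)
      = (Nat.card HX : ℂ) * ((2 : ℂ) ^ n)⁻¹ *
          ∑ᶠ b ∈ {b : Fin n → F2 | ∀ a ∈ HX, ∑ i, a i * b i = 0},
            (Matrix.trace (ρ * Zmat b)) ^ 2 := by
  classical
  have hSet : {b : Fin n → F2 | ∀ a ∈ HX, ∑ i, a i * b i = 0}
      = (Kmod HX : Set (Fin n → F2)) := by
    ext b; simp [Set.mem_setOf_eq, mem_Kmod]
  have hH : ((HX : Set (Fin n → F2))).Finite := Set.toFinite _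
  have hK : ((Kmod HX : Set (Fin n → F2))).Finite := Set.toFinite _
  rw [hSet, ← hH.coe_toFinset, finsum_mem_coe_finset,
    ← hK.coe_toFinset, finsum_mem_coe_finset]
  -- the constant
  have hcard : (Nat.card HX : ℂ) * ((2:ℂ)^n)⁻¹ * (hK.toFinset.card : ℂ) = 1 := by
    have h1 : (hK.toFinset.card : ℕ) = Nat.card (Kmod HX) :=
      (Nat.card_eq_card_finite_toFinset hK).symm
    have h2 := card_mul HX
    have h2' : ((Nat.card HX : ℂ)) * ((Nat.card (Kmod HX) : ℂ)) = (2:ℂ)^n := by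
      exact_mod_cast congrArg (Nat.cast : ℕ → ℂ) h2
    have hne : (2:ℂ)^n ≠ 0 := pow_ne_zero _ two_ne_zero
    have h3 : ((Nat.card HX : ℂ)) * ((Nat.card (Kmod HX) : ℂ)) * ((2:ℂ)^n)⁻¹ = 1 := by
      rw [h2', mul_inv_cancel₀ hne]
    rw [h1]
    linear_combination h3
  -- RHS transformation
  have rhs_eq : ∑ b ∈ hK.toFinset, (Matrix.trace (ρ * Zmat b)) ^ 2
      = ∑ x, ∑ y, (ρ x x * ρ y y) *
          (if x + y ∈ HX then (hK.toFinset.card : ℂ) else 0) := by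
    have step1 : ∀ b, (Matrix.trace (ρ * Zmat b)) ^ 2
        = ∑ x, ∑ y, (ρ x x * ρ y y) * (-1:ℂ)^((∑ i, b i * (x+y) i).val) := by
      intro b
      rw [trace_eq, sq, Finset.sum_mul_sum]
      refine Finset.sum_congr rfl (fun x _ => Finset.sum_congr rfl (fun y _ => ?_))
      have : (∑ i, b i * x i) + (∑ i, b i * y i) = ∑ i, b i * (x+y) i := by
        rw [← Finset.sum_add_distrib]
        exact Finset.sum_congr rfl (fun i _ => by simp [Pi.add_apply, mul_add])
      rw [← this, ← negpow_mul]; ring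
    rw [Finset.sum_congr rfl (fun b _ => step1 b), Finset.sum_comm]
    refine Finset.sum_congr rfl (fun x _ => ?_)
    rw [Finset.sum_comm]
    refine Finset.sum_congr rfl (fun y _ => ?_)
    rw [← Finset.mul_sum, char_sum HX hK (x+y)]
  rw [rhs_eq]
  -- LHS transformation
  have lhs_eq : ∑ a ∈ hH.toFinset, cds ρ a
      = ∑ x, ∑ y, (if x + y ∈ HX then ρ x x * ρ y y else 0) := by
    simp only [cds]
    rw [Finset.sum_comm]
    refine Finset.sum_congr rfl (fun x _ => ?_)
    have hfin : hH.toFinset = Finset.univ.filter (· ∈ HX) := by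
      ext a
      simp only [hH.mem_toFinset, Finset.mem_filter, Finset.mem_univ, true_and]
      exact Iff.rfl
    rw [hfin, Finset.sum_filter]
    calc ∑ a, (if a ∈ HX then ρ x x * ρ (x+a) (x+a) else 0)
        = ∑ y, (if (Equiv.addLeft x) y ∈ HX then
            ρ x x * ρ (x+(Equiv.addLeft x) y) (x+(Equiv.addLeft x) y) else 0) :=
          (Equiv.sum_comp (Equiv.addLeft x)
            (fun a => if a ∈ HX then ρ x x * ρ (x+a) (x+a) else 0)).symm
      _ = ∑ y, (if x + y ∈ HX then ρ x x * ρ y y else 0) := by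
          refine Finset.sum_congr rfl (fun y _ => ?_)
          have hxy : x + (x + y) = y := by funext i; exact f2cancel (x i) (y i)
          simp only [Equiv.coe_addLeft, hxy]
  rw [lhs_eq, Finset.mul_sum]
  refine Finset.sum_congr rfl (fun x _ => ?_)
  rw [Finset.mul_sum]
  refine Finset.sum_congr rfl (fun y _ => ?_)
  by_cases h : x + y ∈ HX
  · rw [if_pos h, if_pos h]
    linear_combination (-(ρ x x * ρ y y)) * hcard
  · rw [if_neg h, if_neg h]; ring
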